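/- Let 𝒳 = {−1,1} and a, b ∈ 𝒳^n with a_n + b_n = 2 (i.e., a_n = b_n = 1) and a_i + b_i = 0 for all i ∈ [1:n−1]. Then the tensor T with T_{ijk} = a_i a_j a_k + b_i b_j b_k determines the pair (a,b) up to exactly one binary choice: there are exactly 2 pairs (a,b) producing T. -/

import Mathlib

/-- a, b ∈ {−1,1}^{n+1} (n ≥ 1) with a, b equal to 1 in the last
coordinate and a_i + b_i = 0 elsewhere. Then exactly 2 pairs (a', b') of {−1,1}-vectors
produce the same tensor T_{ijk} = a_i a_j a_k + b_i b_j b_k. -/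
theorem two_decompositions (n : ℕ) (hn : 1 ≤ n) (a b : Fin (n + 1) → ℝ)
    (ha : ∀ i, a i = 1 ∨ a i = -1) (hb : ∀ i, b i = 1 ∨ b i = -1)
    (halast : a (Fin.last n) = 1) (hblast : b (Fin.last n) = 1)
    (hab : ∀ i : Fin (n + 1), i ≠ Fin.last n → a i + b i = 0) :
    Nat.card {p : (Fin (n + 1) → ↥({-1, 1} : Finset ℝ))
        × (Fin (n + 1) → ↥({-1, 1} : Finset ℝ)) //
      ∀ i j k, (p.1 i : ℝ) * (p.1 j : ℝ) * (p.1 k : ℝ)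
          + (p.2 i : ℝ) * (p.2 j : ℝ) * (p.2 k : ℝ)
        = a i * a j * a k + b i * b j * b k} = 2 := by
  classical
  have hmem : ∀ t : ℝ, t = 1 ∨ t = -1 → t ∈ ({-1, 1} : Finset ℝ) := by
    intro t ht; rcases ht with h | h <;> simp [h]
  set A : Fin (n+1) → ↥({-1, 1} : Finset ℝ) := fun i => ⟨a i, hmem _ (ha i)⟩ with hA
  set B : Fin (n+1) → ↥({-1, 1} : Finset ℝ) := fun i => ⟨b i, hmem _ (hb i)⟩ with hB
  have hi0 : (0 : Fin (n+1)) ≠ Fin.last n := by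
    intro h
    have := congrArg Fin.val h
    simp [Fin.last] at this
    omega
  have hbneg : ∀ i : Fin (n+1), i ≠ Fin.last n → b i = -a i := by
    intro i hi; have := hab i hi; linarith
  have ha0 : a 0 ≠ 0 := by rcases ha 0 with h | h <;> rw [h] <;> norm_num
  -- the key characterization
  have key : ∀ p : (Fin (n + 1) → ↥({-1, 1} : Finset ℝ))
        × (Fin (n + 1) → ↥({-1, 1} : Finset ℝ)),
      (∀ i j k, (p.1 i : ℝ) * (p.1 j : ℝ) * (p.1 k : ℝ)
          + (p.2 i : ℝ) * (p.2 j : ℝ) * (p.2 k : ℝ)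
        = a i * a j * a k + b i * b j * b k) ↔ (p = (A, B) ∨ p = (B, A)) := by
    intro p
    constructor
    · intro hp
      set x : Fin (n+1) → ℝ := fun i => (p.1 i : ℝ) with hxdef
      set y : Fin (n+1) → ℝ := fun i => (p.2 i : ℝ) with hydef
      have hx : ∀ i, x i = 1 ∨ x i = -1 := by
        intro i
        have := (p.1 i).2
        simp only [Finset.mem_insert, Finset.mem_singleton] at this
        tauto
      have hy : ∀ i, y i = 1 ∨ y i = -1 := by
        intro i
        have := (p.2 i).2
        simp only [Finset.mem_insert, Finset.mem_singleton] at this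
        tauto
      have cube : ∀ t : ℝ, t = 1 ∨ t = -1 → t * t * t = t := by
        intro t ht; rcases ht with h | h <;> rw [h] <;> norm_num
      have h1 : ∀ i, x i + y i = a i + b i := by
        intro i
        have := hp i i i
        rw [cube _ (hx i), cube _ (hy i), cube _ (ha i), cube _ (hb i)] at this
        exact this
      have hxl : x (Fin.last n) = 1 ∧ y (Fin.last n) = 1 := by
        have := h1 (Fin.last n)
        rw [halast, hblast] at this
        rcases hx (Fin.last n) with h | h <;> rcases hy (Fin.last n) with h' | h' <;>
          rw [h, h'] at this ⊢ <;> (revert this; norm_num)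
      have h3 : ∀ i : Fin (n+1), i ≠ Fin.last n → y i = -x i := by
        intro i hi
        have := h1 i
        rw [hab i hi] at this
        linarith
      have h4 : ∀ i j : Fin (n+1), i ≠ Fin.last n → j ≠ Fin.last n →
          x i * x j = a i * a j := by
        intro i j hi hj
        have h := hp i j (Fin.last n)
        have e1 : (p.1 i : ℝ) = x i := rfl
        have e2 : (p.2 i : ℝ) = y i := rfl
        rw [show (p.1 (Fin.last n) : ℝ) = x (Fin.last n) from rfl,
          show (p.2 (Fin.last n) : ℝ) = y (Fin.last n) from rfl,
          hxl.1, hxl.2, halast, hblast,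
          show (p.1 i : ℝ) = x i from rfl, show (p.1 j : ℝ) = x j from rfl,
          show (p.2 i : ℝ) = y i from rfl, show (p.2 j : ℝ) = y j from rfl,
          h3 i hi, h3 j hj, hbneg i hi, hbneg j hj] at h
        linear_combination h / 2
      have hx0 : x 0 = a 0 ∨ x 0 = -a 0 := by
        rcases hx 0 with h | h <;> rcases ha 0 with h' | h' <;>
          rw [h, h'] <;> norm_num
      rcases hx0 with hc | hc
      · left
        have hxa : ∀ i, x i = a i := by
          intro i
          by_cases hi : i = Fin.last n
          · rw [hi, hxl.1, halast]
          · have := h4 0 i hi0 hi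
            rw [hc] at this
            exact mul_left_cancel₀ ha0 this
        have hyb : ∀ i, y i = b i := by
          intro i
          by_cases hi : i = Fin.last n
          · rw [hi, hxl.2, hblast]
          · rw [h3 i hi, hxa i, hbneg i hi]
        refine Prod.ext ?_ ?_ <;> funext i
        · exact Subtype.ext (hxa i)
        · exact Subtype.ext (hyb i)
      · right
        have hxb : ∀ i, x i = b i := by
          intro i
          by_cases hi : i = Fin.last n
          · rw [hi, hxl.1, hblast]
          · have := h4 0 i hi0 hi
            rw [hc] at this
            have h' : x i = -a i := by
              have ha0' : -a 0 ≠ 0 := by simpa using ha0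
              have : (-a 0) * x i = (-a 0) * (-a i) := by linarith [this]
              exact mul_left_cancel₀ ha0' this
            rw [h', hbneg i hi]
        have hya : ∀ i, y i = a i := by
          intro i
          by_cases hi : i = Fin.last n
          · rw [hi, hxl.2, halast]
          · rw [h3 i hi, hxb i, hbneg i hi]; ring
        refine Prod.ext ?_ ?_ <;> funext i
        · exact Subtype.ext (hxb i)
        · exact Subtype.ext (hya i)
    · rintro (rfl | rfl) i j k
      · rfl
      · exact add_comm _ _
  have hne : ((A, B) : (Fin (n + 1) → ↥({-1, 1} : Finset ℝ))
      × (Fin (n + 1) → ↥({-1, 1} : Finset ℝ))) ≠ (B, A) := by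
    intro h
    have h0 : a 0 = b 0 := congrArg (fun q => ((q.1 0 : ℝ)) ) h
    have := hab 0 hi0
    have : a 0 = 0 := by linarith
    exact ha0 this
  rw [Nat.card_congr (Equiv.subtypeEquivRight key)]
  have hset : {p : (Fin (n + 1) → ↥({-1, 1} : Finset ℝ))
      × (Fin (n + 1) → ↥({-1, 1} : Finset ℝ)) | p = (A, B) ∨ p = (B, A)}
      = {(A, B), (B, A)} := by
    ext p; simp [Set.mem_insert_iff]
  calc Nat.card {p : (Fin (n + 1) → ↥({-1, 1} : Finset ℝ))
      × (Fin (n + 1) → ↥({-1, 1} : Finset ℝ)) // p = (A, B) ∨ p = (B, A)}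
      = ({(A, B), (B, A)} : Set _).ncard := by
        rw [← hset]; exact Nat.card_coe_set_eq _
    _ = 2 := Set.ncard_pair hne
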